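/- Let G be a group, H ⊴ G with G/H finite abelian, and suppose every irreducible representation of intermediate subgroups satisfies Schur's lemma. Let ρ be an irreducible representation of H and G¹ a maximal subgroup of G containing H to which ρ extends, with extension π¹. Then Ind^{G¹}_H ρ ≅ ⊕_{ω ∈ (G¹/H)^*} π¹ ⊗ ω. -/

import Mathlib

noncomputable section

variable {G : Type*} [Group G]

/-- A submodule invariant under a representation. -/
def RepInvariant {V : Type*} [AddCommGroup V] [Module ℂ V]
    (π : Representation ℂ G V) (p : Submodule ℂ V) : Prop :=
  ∀ g : G, ∀ v ∈ p, π g v ∈ p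

/-- An irreducible (simple) representation. -/
def RepIrreducible {V : Type*} [AddCommGroup V] [Module ℂ V]
    (π : Representation ℂ G V) : Prop :=
  Nontrivial V ∧ ∀ p : Submodule ℂ V, RepInvariant π p → p = ⊥ ∨ p = ⊤

/-- Isomorphism of representations. -/
def RepIso {V W : Type*} [AddCommGroup V] [Module ℂ V] [AddCommGroup W] [Module ℂ W]
    (π : Representation ℂ G V) (σ : Representation ℂ G W) : Prop :=
  ∃ e : V ≃ₗ[ℂ] W, ∀ g v, e (π g v) = σ g (e v)

/-- `σ` occurs as a subrepresentation of `π`. -/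
def RepContains {V W : Type*} [AddCommGroup V] [Module ℂ V] [AddCommGroup W] [Module ℂ W]
    (π : Representation ℂ G V) (σ : Representation ℂ G W) : Prop :=
  ∃ j : W →ₗ[ℂ] V, Function.Injective j ∧ ∀ g w, j (σ g w) = π g (j w)

/-- Restriction of a representation to a subgroup. -/
def RepRes {V : Type*} [AddCommGroup V] [Module ℂ V] (H : Subgroup G)
    (π : Representation ℂ G V) : Representation ℂ ↥H V :=
  π.comp H.subtype

/-- The conjugation automorphism `h ↦ g h g⁻¹` of a normal subgroup. -/
def conjHom (H : Subgroup G) [hH : H.Normal] (g : G) : ↥H →* ↥H where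
  toFun h := ⟨g * (h : G) * g⁻¹, hH.conj_mem _ h.2 g⟩
  map_one' := by ext; simp
  map_mul' a b := by ext; simp

/-- The conjugate representation `ρ^g : h ↦ ρ(g h g⁻¹)`. -/
def RepConj {W : Type*} [AddCommGroup W] [Module ℂ W] {H : Subgroup G} [H.Normal]
    (ρ : Representation ℂ ↥H W) (g : G) : Representation ℂ ↥H W :=
  ρ.comp (conjHom H g)

/-- The subrepresentation on an invariant submodule. -/
def RepSub {V : Type*} [AddCommGroup V] [Module ℂ V] (π : Representation ℂ G V)
    (p : Submodule ℂ V) (hp : RepInvariant π p) : Representation ℂ G ↥p where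
  toFun g := (π g).restrict (hp g)
  map_one' := by ext v; simp [LinearMap.restrict_apply]
  map_mul' a b := by ext v; simp [LinearMap.restrict_apply]

/-- `π` is a (finite) direct sum of irreducible subrepresentations. -/
def RepFiniteSemisimple {V : Type*} [AddCommGroup V] [Module ℂ V]
    (π : Representation ℂ G V) : Prop :=
  ∃ (n : ℕ) (p : Fin n → Submodule ℂ V) (hp : ∀ i, RepInvariant π (p i)),
    (∀ i, RepIrreducible (RepSub π (p i) (hp i))) ∧ DirectSum.IsInternal p

/-- Schur's lemma holds for `ρ`: every self-intertwiner is a scalar. -/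
def RepSchur {H : Type*} [Group H] {W : Type*} [AddCommGroup W] [Module ℂ W]
    (ρ : Representation ℂ H W) : Prop :=
  ∀ f : W →ₗ[ℂ] W, (∀ h w, f (ρ h w) = ρ h (f w)) → ∃ c : ℂ, f = c • LinearMap.id

/-- The space of the induced representation `Ind_H^G ρ`. -/
def IndSpace {W : Type*} [AddCommGroup W] [Module ℂ W] (H : Subgroup G)
    (ρ : Representation ℂ ↥H W) : Submodule ℂ (G → W) where
  carrier := {f | ∀ (g : G) (h : ↥H), f (g * h) = ρ h⁻¹ (f g)}
  add_mem' := by intro a b ha hb g h; simp [ha g h, hb g h]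
  zero_mem' := by intro g h; simp
  smul_mem' := by intro c f hf g h; simp [hf g h]

/-- The induced representation `Ind_H^G ρ`, with `(x • f)(g) = f (x⁻¹ g)`. -/
def IndRep {W : Type*} [AddCommGroup W] [Module ℂ W] (H : Subgroup G)
    (ρ : Representation ℂ ↥H W) : Representation ℂ G ↥(IndSpace H ρ) where
  toFun x :=
    { toFun := fun f => ⟨fun g => (f : G → W) (x⁻¹ * g), by
        intro g h
        have := f.2 (x⁻¹ * g) h
        simpa [mul_assoc] using this⟩
      map_add' := by intro a b; ext g; simp
      map_smul' := by intro c a; ext g; simp }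
  map_one' := by ext f g; simp
  map_mul' a b := by ext f g; simp [mul_assoc]

/-- The twist `π ⊗ ω` of a representation by a character. -/
def TwistRep {V : Type*} [AddCommGroup V] [Module ℂ V] (π : Representation ℂ G V)
    (ω : G →* ℂˣ) : Representation ℂ G V where
  toFun g := (ω g : ℂ) • π g
  map_one' := by simp
  map_mul' a b := by
    ext v
    simp [Module.End.mul_apply, map_mul, smul_smul, mul_comm]

/-- The direct sum `⊕_i σ_i` of a (finite) family of representations on the same space. -/
def PiRep {ι : Type*} {W : Type*} [AddCommGroup W] [Module ℂ W]
    (σ : ι → Representation ℂ G W) : Representation ℂ G (ι → W) where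
  toFun g := LinearMap.pi fun i => (σ i g).comp (LinearMap.proj i)
  map_one' := by ext v i; simp
  map_mul' a b := by ext v i; simp

end

noncomputable section Aux

namespace Aux17
set_option linter.unusedSectionVars false

variable {K : Type} [Group K] {W : Type} [AddCommGroup W] [Module ℂ W]

/-- Characters of `K` trivial on `N` correspond to characters of `K ⧸ N`. -/
def charEquiv (N : Subgroup K) [N.Normal] (P : (K →* ℂˣ) → Prop)
    (hP : ∀ ω : K →* ℂˣ, P ω ↔ ∀ n : K, n ∈ N → ω n = 1) :
    Subtype P ≃ ((K ⧸ N) →* ℂˣ) where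
  toFun ω := QuotientGroup.lift N ω.1 ((hP ω.1).mp ω.2)
  invFun χ := ⟨χ.comp (QuotientGroup.mk' N), (hP _).mpr fun n hn => by
    simp [(QuotientGroup.eq_one_iff n).mpr hn]⟩
  left_inv ω := Subtype.ext (MonoidHom.ext fun g => rfl)
  right_inv χ := MonoidHom.ext fun q => by
    induction q using QuotientGroup.induction_on with | H x => rfl

variable (N : Subgroup K) [N.Normal]
variable (ρ' : Representation ℂ ↥N W) (π₁ : Representation ℂ K W)
variable (P : (K →* ℂˣ) → Prop)

/-- The forward map of the isomorphism. -/
def Phi [Fintype (K ⧸ N)] (f : ↥(IndSpace N ρ')) (ω : Subtype P) : W :=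
  ∑ q : K ⧸ N, ((ω.1 (Quotient.out q) : ℂˣ) : ℂ) •
    π₁ (Quotient.out q) (f.1 (Quotient.out q))

/-- The inverse map of the isomorphism. -/
def Psi [Fintype (K ⧸ N)] [Fintype (Subtype P)] (v : Subtype P → W) (g : K) : W :=
  (Fintype.card (K ⧸ N) : ℂ)⁻¹ •
    ∑ ω : Subtype P, (((ω.1 g)⁻¹ : ℂˣ) : ℂ) • π₁ g⁻¹ (v ω)

variable {N ρ' π₁ P}

lemma key1 (hext : ∀ m : ↥N, π₁ ↑m = ρ' m) (f : ↥(IndSpace N ρ')) (g : K) (h : ↥N) :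
    π₁ ↑h (f.1 (g * ↑h)) = f.1 g := by
  rw [f.2 g h, hext h, ← Module.End.mul_apply, ← map_mul, mul_inv_cancel, map_one,
    Module.End.one_apply]

lemma hF (hext : ∀ m : ↥N, π₁ ↑m = ρ' m) (f : ↥(IndSpace N ρ')) (ω : Subtype P)
    (hω : ∀ n : K, n ∈ N → ω.1 n = 1) (g : K) (h : ↥N) :
    ((ω.1 (g * ↑h) : ℂˣ) : ℂ) • π₁ (g * ↑h) (f.1 (g * ↑h)) =
      ((ω.1 g : ℂˣ) : ℂ) • π₁ g (f.1 g) := by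
  rw [map_mul, map_mul, hω ↑h h.2, mul_one, Module.End.mul_apply, key1 hext f g h]

lemma hFcoset (hext : ∀ m : ↥N, π₁ ↑m = ρ' m) (f : ↥(IndSpace N ρ')) (ω : Subtype P)
    (hω : ∀ n : K, n ∈ N → ω.1 n = 1) (g : K) :
    ((ω.1 (Quotient.out ((g : K ⧸ N))) : ℂˣ) : ℂ) •
      π₁ (Quotient.out ((g : K ⧸ N))) (f.1 (Quotient.out ((g : K ⧸ N)))) =
      ((ω.1 g : ℂˣ) : ℂ) • π₁ g (f.1 g) := by
  have hmem : g⁻¹ * Quotient.out ((g : K ⧸ N)) ∈ N :=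
    QuotientGroup.eq.mp (QuotientGroup.out_eq' ((g : K ⧸ N))).symm
  have hout : Quotient.out ((g : K ⧸ N)) =
      g * ((⟨g⁻¹ * Quotient.out ((g : K ⧸ N)), hmem⟩ : ↥N) : K) := by
    simp [mul_inv_cancel_left]
  rw [hout, hF hext f ω hω g ⟨_, hmem⟩]

lemma orth1 [Fintype (K ⧸ N)] (χ : (K ⧸ N) →* ℂˣ) (hχ : χ ≠ 1) :
    ∑ q : K ⧸ N, ((χ q : ℂˣ) : ℂ) = 0 := by
  have h := sum_hom_units_eq_zero ((Units.coeHom ℂ).comp χ) ?_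
  · simpa using h
  · intro h
    refine hχ (MonoidHom.ext fun q => Units.ext ?_)
    simpa using DFunLike.congr_fun h q

end Aux17

end Aux
noncomputable section Aux2
namespace Aux17
set_option linter.unusedSectionVars false
set_option maxHeartbeats 1000000

variable {K : Type} [Group K] {W : Type} [AddCommGroup W] [Module ℂ W]
variable {N : Subgroup K} [N.Normal]
variable {ρ' : Representation ℂ ↥N W} {π₁ : Representation ℂ K W}
variable {P : (K →* ℂˣ) → Prop}

lemma commQuot (hcomm : ∀ a b : K, a * b * a⁻¹ * b⁻¹ ∈ N) :
    ∀ a b : K ⧸ N, a * b = b * a := by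
  intro a b
  induction a using QuotientGroup.induction_on with | H x =>
  induction b using QuotientGroup.induction_on with | H y =>
  show (((x * y : K) : K ⧸ N)) = ((y * x : K) : K ⧸ N)
  rw [QuotientGroup.eq]
  simpa [mul_assoc, mul_inv_rev] using hcomm y⁻¹ x⁻¹

lemma dual_sep [Finite (K ⧸ N)] (hcomm : ∀ a b : K, a * b * a⁻¹ * b⁻¹ ∈ N) :
    ∀ x : K ⧸ N, x ≠ 1 → ∃ φ : (K ⧸ N) →* ℂˣ, φ x ≠ 1 := by
  letI : CommGroup (K ⧸ N) :=
    { (inferInstance : Group (K ⧸ N)) with mul_comm := commQuot hcomm }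
  haveI : NeZero (Monoid.exponent (K ⧸ N)) := ⟨Monoid.exponent_ne_zero_of_finite⟩
  intro x hx
  exact CommGroup.exists_apply_ne_one_of_hasEnoughRootsOfUnity (K ⧸ N) ℂ hx

lemma dual_equiv [Finite (K ⧸ N)] (hcomm : ∀ a b : K, a * b * a⁻¹ * b⁻¹ ∈ N) :
    Nonempty (((K ⧸ N) →* ℂˣ) ≃ (K ⧸ N)) := by
  letI : CommGroup (K ⧸ N) :=
    { (inferInstance : Group (K ⧸ N)) with mul_comm := commQuot hcomm }
  haveI : NeZero (Monoid.exponent (K ⧸ N)) := ⟨Monoid.exponent_ne_zero_of_finite⟩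
  obtain ⟨e⟩ := CommGroup.monoidHom_mulEquiv_of_hasEnoughRootsOfUnity (K ⧸ N) ℂ
  exact ⟨e.toEquiv⟩

theorem aux_iso (hfin : Finite (K ⧸ N)) (hcomm : ∀ a b : K, a * b * a⁻¹ * b⁻¹ ∈ N)
    (hext : ∀ m : ↥N, π₁ ↑m = ρ' m)
    (hP : ∀ ω : K →* ℂˣ, P ω ↔ ∀ n : K, n ∈ N → ω n = 1) :
    RepIso (IndRep N ρ') (PiRep fun ω : Subtype P => TwistRep π₁ ω.1) := by
  classical
  letI : Fintype (K ⧸ N) := Fintype.ofFinite _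
  obtain ⟨eD⟩ := dual_equiv hcomm
  haveI : Finite ((K ⧸ N) →* ℂˣ) := Finite.of_equiv _ eD.symm
  letI : Fintype ((K ⧸ N) →* ℂˣ) := Fintype.ofFinite _
  letI : Fintype (Subtype P) := Fintype.ofEquiv _ (charEquiv N P hP).symm
  have hn0 : (Fintype.card (K ⧸ N) : ℂ) ≠ 0 := Nat.cast_ne_zero.mpr Fintype.card_ne_zero
  have hcardD : (Fintype.card ((K ⧸ N) →* ℂˣ) : ℂ) = (Fintype.card (K ⧸ N) : ℂ) := by
    norm_cast
    exact Fintype.card_congr eD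
  have hcan : ∀ (a : K) (x : W), π₁ a (π₁ a⁻¹ x) = x := by
    intro a x
    rw [← Module.End.mul_apply, ← map_mul, mul_inv_cancel, map_one, Module.End.one_apply]
  -- orthogonality: sum over characters
  have sum1 : ∀ x : K, ∑ ω : Subtype P, ((ω.1 x : ℂˣ) : ℂ) =
      if (x : K ⧸ N) = 1 then (Fintype.card (K ⧸ N) : ℂ) else 0 := by
    intro x
    have ht : ∑ ω : Subtype P, ((ω.1 x : ℂˣ) : ℂ)
        = ∑ χ : (K ⧸ N) →* ℂˣ, ((χ (x : K ⧸ N) : ℂˣ) : ℂ) :=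
      Fintype.sum_equiv (charEquiv N P hP) _ _ (fun ω => rfl)
    rw [ht]
    by_cases h : (x : K ⧸ N) = 1
    · simp [h, hcardD]
    · rw [if_neg h]
      obtain ⟨φ, hφ⟩ := dual_sep hcomm _ h
      have hz := sum_hom_units_eq_zero (G := (K ⧸ N) →* ℂˣ) (R := ℂ)
        { toFun := fun χ => ((χ (x : K ⧸ N) : ℂˣ) : ℂ)
          map_one' := by simp
          map_mul' := fun a b => by simp } ?_
      · simpa using hz
      · intro hone
        exact hφ (Units.val_eq_one.mp (by simpa using DFunLike.congr_fun hone φ))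
  -- orthogonality: sum over the group
  have sum2 : ∀ χ : (K ⧸ N) →* ℂˣ, ∑ q : K ⧸ N, ((χ q : ℂˣ) : ℂ) =
      if χ = 1 then (Fintype.card (K ⧸ N) : ℂ) else 0 := by
    intro χ
    by_cases h : χ = 1
    · simp [h]
    · rw [if_neg h]
      exact orth1 χ h
  -- the inverse function lands in the induced space
  have psi_mem : ∀ v : Subtype P → W, Psi N π₁ P v ∈ IndSpace N ρ' := by
    intro v
    show ∀ (g : K) (h : ↥N), Psi N π₁ P v (g * ↑h) = ρ' h⁻¹ (Psi N π₁ P v g)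
    intro g h
    have hπ : π₁ (g * (↑h : K))⁻¹ = ρ' h⁻¹ * π₁ g⁻¹ := by
      rw [mul_inv_rev, map_mul]
      congr 1
      rw [← hext h⁻¹]
      rfl
    show (Fintype.card (K ⧸ N) : ℂ)⁻¹ •
        ∑ ω : Subtype P, (((ω.1 (g * ↑h))⁻¹ : ℂˣ) : ℂ) • π₁ (g * (↑h : K))⁻¹ (v ω)
      = ρ' h⁻¹ ((Fintype.card (K ⧸ N) : ℂ)⁻¹ •
        ∑ ω : Subtype P, (((ω.1 g)⁻¹ : ℂˣ) : ℂ) • π₁ g⁻¹ (v ω))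
    rw [map_smul, map_sum]
    congr 1
    refine Finset.sum_congr rfl fun ω _ => ?_
    rw [map_smul, map_mul, (hP ω.1).mp ω.2 ↑h h.2, mul_one, hπ, Module.End.mul_apply]
  -- left inverse : Psi ∘ Phi = id
  have hleft : ∀ f : ↥(IndSpace N ρ'), Psi N π₁ P (Phi N ρ' π₁ P f) = f.1 := by
    intro f
    funext g
    show (Fintype.card (K ⧸ N) : ℂ)⁻¹ •
        ∑ ω : Subtype P, (((ω.1 g)⁻¹ : ℂˣ) : ℂ) • π₁ g⁻¹ (Phi N ρ' π₁ P f ω) = f.1 g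
    have step1 : ∑ ω : Subtype P, (((ω.1 g)⁻¹ : ℂˣ) : ℂ) • π₁ g⁻¹ (Phi N ρ' π₁ P f ω)
        = ∑ q : K ⧸ N, (∑ ω : Subtype P, ((ω.1 (g⁻¹ * Quotient.out q) : ℂˣ) : ℂ)) •
            π₁ (g⁻¹ * Quotient.out q) (f.1 (Quotient.out q)) := by
      have e1 : ∀ ω : Subtype P, (((ω.1 g)⁻¹ : ℂˣ) : ℂ) • π₁ g⁻¹ (Phi N ρ' π₁ P f ω)
          = ∑ q : K ⧸ N, ((ω.1 (g⁻¹ * Quotient.out q) : ℂˣ) : ℂ) •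
              π₁ (g⁻¹ * Quotient.out q) (f.1 (Quotient.out q)) := by
        intro ω
        unfold Phi
        rw [map_sum, Finset.smul_sum]
        refine Finset.sum_congr rfl fun q _ => ?_
        rw [map_smul, smul_smul, map_mul ω.1, map_inv ω.1, map_mul π₁, Module.End.mul_apply,
          Units.val_mul]
      rw [Finset.sum_congr rfl fun ω _ => e1 ω, Finset.sum_comm]
      exact Finset.sum_congr rfl fun q _ => (Finset.sum_smul).symm
    rw [step1]
    have hcond : ∀ q : K ⧸ N, (((g⁻¹ * Quotient.out q : K) : K ⧸ N) = 1) ↔ q = ((g : K ⧸ N)) := by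
      intro q
      rw [show ((g⁻¹ * Quotient.out q : K) : K ⧸ N) = ((g : K ⧸ N))⁻¹ * q by
        rw [QuotientGroup.mk_mul, QuotientGroup.mk_inv, QuotientGroup.out_eq'],
        inv_mul_eq_one]
      exact eq_comm
    have step2 : ∑ q : K ⧸ N, (∑ ω : Subtype P, ((ω.1 (g⁻¹ * Quotient.out q) : ℂˣ) : ℂ)) •
            π₁ (g⁻¹ * Quotient.out q) (f.1 (Quotient.out q))
        = (Fintype.card (K ⧸ N) : ℂ) • f.1 g := by
      have e2 : ∀ q : K ⧸ N, (∑ ω : Subtype P, ((ω.1 (g⁻¹ * Quotient.out q) : ℂˣ) : ℂ)) •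
            π₁ (g⁻¹ * Quotient.out q) (f.1 (Quotient.out q))
          = if q = ((g : K ⧸ N)) then (Fintype.card (K ⧸ N) : ℂ) •
              π₁ (g⁻¹ * Quotient.out q) (f.1 (Quotient.out q)) else 0 := by
        intro q
        rw [sum1, ite_smul, zero_smul, if_congr (hcond q) rfl rfl]
      rw [Finset.sum_congr rfl fun q _ => e2 q, Finset.sum_ite_eq' Finset.univ ((g : K ⧸ N))]
      rw [if_pos (Finset.mem_univ _)]
      congr 1
      have hmem : g⁻¹ * Quotient.out ((g : K ⧸ N)) ∈ N :=
        QuotientGroup.eq.mp (QuotientGroup.out_eq' ((g : K ⧸ N))).symm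
      have hout : Quotient.out ((g : K ⧸ N)) = g * ((⟨_, hmem⟩ : ↥N) : K) := by
        simp [mul_inv_cancel_left]
      rw [show f.1 (Quotient.out ((g : K ⧸ N))) = f.1 (g * ((⟨_, hmem⟩ : ↥N) : K)) by
        rw [← hout]]
      exact key1 hext f g ⟨_, hmem⟩
    rw [step2, smul_smul, inv_mul_cancel₀ hn0, one_smul]
  -- right inverse : Phi ∘ Psi = id
  have hchi : ∀ ω ω' : Subtype P,
      (charEquiv N P hP ω * (charEquiv N P hP ω')⁻¹ = 1) ↔ ω' = ω := by
    intro ω ω'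
    constructor
    · intro h
      refine ((charEquiv N P hP).injective (MonoidHom.ext fun q => ?_)).symm
      have h2 := DFunLike.congr_fun h q
      simpa [mul_inv_eq_one] using h2
    · rintro rfl
      ext q
      simp
  have hright : ∀ (v : Subtype P → W) (ω : Subtype P),
      Phi N ρ' π₁ P ⟨Psi N π₁ P v, psi_mem v⟩ ω = v ω := by
    intro v ω
    show ∑ q : K ⧸ N, ((ω.1 (Quotient.out q) : ℂˣ) : ℂ) •
        π₁ (Quotient.out q) (Psi N π₁ P v (Quotient.out q)) = v ω
    have e1 : ∀ q : K ⧸ N, ((ω.1 (Quotient.out q) : ℂˣ) : ℂ) •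
        π₁ (Quotient.out q) (Psi N π₁ P v (Quotient.out q))
        = (Fintype.card (K ⧸ N) : ℂ)⁻¹ • ∑ ω' : Subtype P,
            (((charEquiv N P hP ω * (charEquiv N P hP ω')⁻¹) q : ℂˣ) : ℂ) • v ω' := by
      intro q
      unfold Psi
      rw [map_smul, map_sum, smul_comm]
      congr 1
      rw [Finset.smul_sum]
      refine Finset.sum_congr rfl fun ω' _ => ?_
      rw [map_smul, hcan, smul_smul]
      congr 1
      conv_rhs => rw [← QuotientGroup.out_eq' q]
      show ((ω.1 (Quotient.out q) : ℂˣ) : ℂ) * (((ω'.1 (Quotient.out q))⁻¹ : ℂˣ) : ℂ)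
        = ((ω.1 (Quotient.out q) * (ω'.1 (Quotient.out q))⁻¹ : ℂˣ) : ℂ)
      rw [Units.val_mul]
    rw [Finset.sum_congr rfl fun q _ => e1 q, ← Finset.smul_sum, Finset.sum_comm]
    have e2 : ∀ ω' : Subtype P, ∑ q : K ⧸ N,
        (((charEquiv N P hP ω * (charEquiv N P hP ω')⁻¹) q : ℂˣ) : ℂ) • v ω'
        = if ω' = ω then (Fintype.card (K ⧸ N) : ℂ) • v ω' else 0 := by
      intro ω'
      rw [← Finset.sum_smul, sum2, ite_smul, zero_smul, if_congr (hchi ω ω') rfl rfl]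
    rw [Finset.sum_congr rfl fun ω' _ => e2 ω', Finset.sum_ite_eq' Finset.univ ω]
    rw [if_pos (Finset.mem_univ _), smul_smul, inv_mul_cancel₀ hn0, one_smul]
  -- equivariance
  have hequiv : ∀ (x : K) (f : ↥(IndSpace N ρ')) (ω : Subtype P),
      Phi N ρ' π₁ P (IndRep N ρ' x f) ω = ((ω.1 x : ℂˣ) : ℂ) • π₁ x (Phi N ρ' π₁ P f ω) := by
    intro x f ω
    have hω := (hP ω.1).mp ω.2
    have hpt : ∀ p : K ⧸ N,
        ((ω.1 x : ℂˣ) : ℂ) • π₁ x (((ω.1 (Quotient.out p) : ℂˣ) : ℂ) •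
          π₁ (Quotient.out p) (f.1 (Quotient.out p)))
        = ((ω.1 (Quotient.out ((x : K ⧸ N) * p)) : ℂˣ) : ℂ) •
            π₁ (Quotient.out ((x : K ⧸ N) * p))
              ((IndRep N ρ' x f).1 (Quotient.out ((x : K ⧸ N) * p))) := by
      intro p
      have h1 : ((x : K ⧸ N) * p) = ((x * Quotient.out p : K) : K ⧸ N) := by
        rw [QuotientGroup.mk_mul, QuotientGroup.out_eq']
      rw [h1, hFcoset hext (IndRep N ρ' x f) ω hω (x * Quotient.out p)]
      have h2 : (IndRep N ρ' x f).1 (x * Quotient.out p) = f.1 (Quotient.out p) := by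
        show f.1 (x⁻¹ * (x * Quotient.out p)) = f.1 (Quotient.out p)
        rw [inv_mul_cancel_left]
      rw [h2, map_mul ω.1, Units.val_mul, map_mul π₁, Module.End.mul_apply, map_smul, smul_smul]
    show Phi N ρ' π₁ P (IndRep N ρ' x f) ω
        = ((ω.1 x : ℂˣ) : ℂ) • π₁ x (∑ q : K ⧸ N, ((ω.1 (Quotient.out q) : ℂˣ) : ℂ) •
            π₁ (Quotient.out q) (f.1 (Quotient.out q)))
    rw [map_sum, Finset.smul_sum]
    exact (Fintype.sum_equiv (Equiv.mulLeft ((x : K ⧸ N))) _ _ (fun p => hpt p)).symm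
  -- assemble the isomorphism
  refine ⟨{ toFun := Phi N ρ' π₁ P
            map_add' := fun a b => funext fun ω => by
              simp only [Phi, Pi.add_apply, Submodule.coe_add, map_add, smul_add,
                Finset.sum_add_distrib]
            map_smul' := fun c a => funext fun ω => by
              simp only [Phi, Pi.smul_apply, Submodule.coe_smul, map_smul, RingHom.id_apply,
                Finset.smul_sum, smul_comm c]
            invFun := fun v => ⟨Psi N π₁ P v, psi_mem v⟩
            left_inv := fun f => Subtype.ext (hleft f)
            right_inv := fun v => funext fun ω => hright v ω }, ?_⟩
  intro x f
  funext ω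
  exact hequiv x f ω

end Aux17
end Aux2
/-- Let `H ⊴ G` with `G/H` finite abelian, `ρ` an irreducible representation of `H` (with
Schur's lemma for irreducible representations of intermediate subgroups), and `G¹` a
maximal subgroup of `G` containing `H` to which `ρ` extends, with extension `π¹`.  Then
`Ind_H^{G¹} ρ ≅ ⊕_{ω ∈ (G¹/H)^*} π¹ ⊗ ω`. -/
theorem statement17 {G : Type} [Group G] (H : Subgroup G) [H.Normal]
    (hfin : Finite (G ⧸ H)) (hab : ∀ a b : G, a * b * a⁻¹ * b⁻¹ ∈ H)
    {W : Type} [AddCommGroup W] [Module ℂ W]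
    (ρ : Representation ℂ ↥H W) (hρ : RepIrreducible ρ)
    (hschur : ∀ (K : Subgroup G) (σ : Representation ℂ ↥K W), RepIrreducible σ → RepSchur σ)
    (G₁ : Subgroup G) (hHG₁ : H ≤ G₁)
    (π₁ : Representation ℂ ↥G₁ W)
    (hext : ∀ (h : G) (hh : h ∈ H), π₁ ⟨h, hHG₁ hh⟩ = ρ ⟨h, hh⟩)
    (hmax : ∀ (G₂ : Subgroup G) (hle : G₁ ≤ G₂),
      (∃ π₂ : Representation ℂ ↥G₂ W,
        ∀ (h : G) (hh : h ∈ H), π₂ ⟨h, hle (hHG₁ hh)⟩ = ρ ⟨h, hh⟩) → G₂ = G₁) :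
    RepIso
      (IndRep (H.subgroupOf G₁) (ρ.comp (Subgroup.subgroupOfEquivOfLe hHG₁).toMonoidHom))
      (PiRep fun ω : {ω : ↥G₁ →* ℂˣ // ∀ x : ↥G₁, (x : G) ∈ H → ω x = 1} =>
        TwistRep π₁ ω.1) := by
  haveI := hfin
  have hfinQ : Finite (↥G₁ ⧸ H.subgroupOf G₁) := by
    have e := Subgroup.quotientEquivProdOfLE hHG₁
    haveI : Finite ((G ⧸ G₁) × ↥G₁ ⧸ H.subgroupOf G₁) := Finite.of_equiv _ e
    exact Finite.of_injective
      (fun q => ((QuotientGroup.mk (1:G) : G ⧸ G₁), q) : ↥G₁ ⧸ H.subgroupOf G₁ → (G ⧸ G₁) × ↥G₁ ⧸ H.subgroupOf G₁)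
      (fun a b h => congrArg Prod.snd h)
  exact Aux17.aux_iso hfinQ
    (fun a b => Subgroup.mem_subgroupOf.mpr (by simpa using hab ↑a ↑b))
    (fun m => hext ↑↑m m.2)
    (fun ω => Iff.rfl)
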